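/- (Théorème fondamental 3.3.4) Let (φ, H, r) be a Dallajascar on a finite nonempty type S and (θ, K, s) a Dallajascar on a finite nonempty type T. Then (φ, H, r) and (θ, K, s) are equivalent if and only if M(φ,H) = M(θ,K). -/

import Mathlib

/-- A *Dallajascar* on a finite nonempty type `S`: a parent function `phi : S → Option S`,
an ordered-children function `H : S → List S`, and a root `r : S`, such that
(i) `phi r = none`; (ii) `phi x ≠ none` for `x ≠ r`; (iii) the transitive closure of the
parent relation is irreflexive; (iv) `H x` is a duplicate-free list whose members are
exactly the `y` with `phi y = some x`. -/
structure Dallajascar (S : Type*) [Fintype S] [Nonempty S] where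
  phi : S → Option S
  H : S → List S
  r : S
  phi_root : phi r = none
  phi_ne_none : ∀ x : S, x ≠ r → phi x ≠ none
  acyclic : ∀ x : S, ¬ Relation.TransGen (fun y z => phi y = some z) x x
  H_nodup : ∀ x : S, (H x).Nodup
  mem_H : ∀ x y : S, y ∈ H x ↔ phi y = some x

namespace Dallajascar

variable {S : Type*} [Fintype S] [Nonempty S]

/-- The parent relation: `P D y x` iff `x` is the parent of `y`. -/
def P (D : Dallajascar S) (y x : S) : Prop := D.phi y = some x

/-- The parent relation is well-founded. -/
theorem wfP (D : Dallajascar S) : WellFounded D.P := by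
  haveI : IsTrans S (Relation.TransGen D.P) := ⟨fun _ _ _ h₁ h₂ => h₁.trans h₂⟩
  haveI : IsIrrefl S (Relation.TransGen D.P) := ⟨D.acyclic⟩
  exact Subrelation.wf (r := Relation.TransGen D.P)
    (fun {x y} h => Relation.TransGen.single h)
    (Finite.wellFounded_of_trans_of_irrefl _)

/-- `W D x` : the word over `{true (open), false (close)}` associated with the subtree
rooted at `x`, defined by well-founded recursion:
`W x = true :: (((H x).map W).flatten ++ [false])`. -/
noncomputable def W (D : Dallajascar S) : S → List Bool :=
  D.wfP.fix fun x ih =>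
    true :: ((((D.H x).attach.map fun (y : {y : S // y ∈ D.H x}) =>
      ih y.1 ((D.mem_H x y.1).1 y.2)).flatten) ++ [false])

/-- `M(φ,H)` : the Jassological word of the Dallajascar. -/
noncomputable def MJword (D : Dallajascar S) : List Bool := D.W D.r

end Dallajascar

namespace DallaAux

open Dallajascar

variable {S : Type*} [Fintype S] [Nonempty S] {T : Type*} [Fintype T] [Nonempty T]

/-- weight of a parenthesis word -/
def wt (l : List Bool) : ℤ := (l.map fun b => if b then (1 : ℤ) else -1).sum

lemma wt_nil : wt [] = 0 := rfl

lemma wt_append (a b : List Bool) : wt (a ++ b) = wt a + wt b := by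
  simp [wt]

lemma wt_cons (b : Bool) (l : List Bool) :
    wt (b :: l) = (if b then (1 : ℤ) else -1) + wt l := by
  simp [wt]

/-- a good (irreducible balanced) word -/
def Good (w : List Bool) : Prop :=
  w ≠ [] ∧ wt w = 0 ∧ ∀ p, p <+: w → p ≠ [] → p ≠ w → 0 < wt p

lemma wt_flatten_zero : ∀ (L : List (List Bool)), (∀ w ∈ L, wt w = 0) →
    wt L.flatten = 0 := by
  intro L
  induction L with
  | nil => intro _; rfl
  | cons a L ih =>
      intro h
      simp only [List.flatten_cons, wt_append]
      rw [h a (by simp), ih (fun w hw => h w (by simp [hw]))]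
      ring

lemma flatten_prefix_nonneg : ∀ (L : List (List Bool)), (∀ w ∈ L, Good w) →
    ∀ p, p <+: L.flatten → 0 ≤ wt p := by
  intro L
  induction L with
  | nil =>
      intro _ p hp
      simp only [List.flatten_nil, List.prefix_nil] at hp
      simp [hp, wt_nil]
  | cons a L ih =>
      intro h p hp
      simp only [List.flatten_cons] at hp
      have ha : Good a := h a (by simp)
      by_cases hl : p.length ≤ a.length
      · have hpa : p <+: a := List.prefix_of_prefix_length_le hp (List.prefix_append a _) hl
        rcases eq_or_ne p [] with rfl | hne
        · simp [wt_nil]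
        rcases eq_or_ne p a with rfl | hne'
        · exact le_of_eq ha.2.1.symm
        · exact le_of_lt (ha.2.2 p hpa hne hne')
      · have hap : a <+: p :=
          List.prefix_of_prefix_length_le (List.prefix_append a _) hp (le_of_not_ge hl)
        obtain ⟨q, rfl⟩ := hap
        have hq : q <+: L.flatten := (List.prefix_append_right_inj a).mp hp
        have := ih (fun w hw => h w (by simp [hw])) q hq
        rw [wt_append, ha.2.1]
        linarith

lemma good_prefix_eq {a b : List Bool} (ha : Good a) (hb : Good b) (h : a <+: b) :
    a = b := by
  by_contra hne
  have := hb.2.2 a h ha.1 hne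
  rw [ha.2.1] at this
  exact lt_irrefl 0 this

lemma flatten_inj : ∀ (L₁ L₂ : List (List Bool)), (∀ w ∈ L₁, Good w) →
    (∀ w ∈ L₂, Good w) → L₁.flatten = L₂.flatten → L₁ = L₂ := by
  intro L₁
  induction L₁ with
  | nil =>
      intro L₂ _ h2 h
      cases L₂ with
      | nil => rfl
      | cons b L₂ =>
          exfalso
          have hb : Good b := h2 b (by simp)
          simp only [List.flatten_nil, List.flatten_cons] at h
          rcases List.append_eq_nil_iff.mp h.symm with ⟨hb', _⟩
          exact hb.1 hb'
  | cons a L₁ ih =>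
      intro L₂ h1 h2 h
      cases L₂ with
      | nil =>
          exfalso
          have ha : Good a := h1 a (by simp)
          simp only [List.flatten_cons, List.flatten_nil] at h
          rcases List.append_eq_nil_iff.mp h with ⟨ha', _⟩
          exact ha.1 ha'
      | cons b L₂ =>
          have ha : Good a := h1 a (by simp)
          have hb : Good b := h2 b (by simp)
          simp only [List.flatten_cons] at h
          have hab : a = b := by
            rcases le_total a.length b.length with hl | hl
            · exact good_prefix_eq ha hb
                (List.prefix_of_prefix_length_le (h ▸ List.prefix_append a _)
                  (List.prefix_append b _) hl)
            · exact (good_prefix_eq hb ha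
                (List.prefix_of_prefix_length_le (h.symm ▸ List.prefix_append b _)
                  (List.prefix_append a _) hl)).symm
          subst hab
          have := List.append_cancel_left h
          rw [ih L₂ (fun w hw => h1 w (by simp [hw])) (fun w hw => h2 w (by simp [hw])) this]

lemma W_eq (D : Dallajascar S) (x : S) :
    D.W x = true :: (((D.H x).map D.W).flatten ++ [false]) := by
  unfold Dallajascar.W
  rw [WellFounded.fix_eq]
  simp only [List.attach_map_val]

lemma W_good (D : Dallajascar S) (x : S) : Good (D.W x) := by
  induction x using WellFounded.induction D.wfP with
  | _ x IH =>
    have hch : ∀ w ∈ (D.H x).map D.W, Good w := by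
      intro w hw
      obtain ⟨y, hy, rfl⟩ := List.mem_map.mp hw
      exact IH y ((D.mem_H x y).mp hy)
    rw [W_eq]
    refine ⟨by simp, ?_, ?_⟩
    · rw [wt_cons, wt_append, wt_flatten_zero _ (fun w hw => (hch w hw).2.1)]
      simp [wt]
    · intro p hp hne hnall
      cases p with
      | nil => exact absurd rfl hne
      | cons c q =>
          rw [List.cons_prefix_cons] at hp
          obtain ⟨rfl, hq⟩ := hp
          rw [wt_cons]
          simp only [if_true]
          by_cases hl : q.length ≤ (((D.H x).map D.W).flatten).length
          · have hq' : q <+: ((D.H x).map D.W).flatten :=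
              List.prefix_of_prefix_length_le hq (List.prefix_append _ _) hl
            have := flatten_prefix_nonneg _ hch q hq'
            linarith
          · exfalso
            apply hnall
            have hle := hq.length_le
            have hlen2 : q.length = (((D.H x).map D.W).flatten ++ [false]).length := by
              simp only [List.length_append, List.length_cons, List.length_nil] at hle ⊢
              omega
            have : q = ((D.H x).map D.W).flatten ++ [false] := hq.eq_of_length hlen2
            rw [this]

lemma children_words_eq (D₁ : Dallajascar S) (D₂ : Dallajascar T) {x : S} {y : T}
    (h : D₁.W x = D₂.W y) : (D₁.H x).map D₁.W = (D₂.H y).map D₂.W := by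
  rw [W_eq, W_eq] at h
  have h2 : ((D₁.H x).map D₁.W).flatten ++ [false]
      = ((D₂.H y).map D₂.W).flatten ++ [false] := by
    exact List.tail_eq_of_cons_eq h
  have h3 : ((D₁.H x).map D₁.W).flatten = ((D₂.H y).map D₂.W).flatten := by
    have := congrArg List.dropLast h2
    simpa [List.dropLast_concat] using this
  refine flatten_inj _ _ ?_ ?_ h3 <;>
  · intro w hw
    obtain ⟨z, _, rfl⟩ := List.mem_map.mp hw
    exact W_good _ z

/-- the correspondence relation between the two trees -/
inductive Corr (D₁ : Dallajascar S) (D₂ : Dallajascar T) : S → T → Prop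
  | root : Corr D₁ D₂ D₁.r D₂.r
  | child {a : S} {b : T} (h : Corr D₁ D₂ a b) (i : ℕ)
      (h₁ : i < (D₁.H a).length) (h₂ : i < (D₂.H b).length) :
      Corr D₁ D₂ ((D₁.H a).get ⟨i, h₁⟩) ((D₂.H b).get ⟨i, h₂⟩)

lemma Corr.swap {D₁ : Dallajascar S} {D₂ : Dallajascar T} {a : S} {b : T}
    (h : Corr D₁ D₂ a b) : Corr D₂ D₁ b a := by
  induction h with
  | root => exact Corr.root
  | child h i h₁ h₂ ih => exact Corr.child ih i h₂ h₁

lemma Corr.w_eq {D₁ : Dallajascar S} {D₂ : Dallajascar T}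
    (hM : D₁.MJword = D₂.MJword) {a : S} {b : T} (h : Corr D₁ D₂ a b) :
    D₁.W a = D₂.W b := by
  induction h with
  | root => exact hM
  | child h i h₁ h₂ ih =>
      have hm := children_words_eq D₁ D₂ ih
      have : ((D₁.H _).map D₁.W).get ⟨i, by simpa using h₁⟩
          = ((D₂.H _).map D₂.W).get ⟨i, by simpa using h₂⟩ := by
        simp only [List.get_eq_getElem]
        rw [List.getElem_of_eq hm]
      simpa using this

lemma not_corr_root_child {D₁ : Dallajascar S} {a : S}
    (i : ℕ) (h₁ : i < (D₁.H a).length) (heq : (D₁.H a).get ⟨i, h₁⟩ = D₁.r) : False := by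
  have hmem : D₁.r ∈ D₁.H a := heq ▸ List.get_mem _ _
  have := (D₁.mem_H a D₁.r).mp hmem
  rw [D₁.phi_root] at this
  exact nomatch this

lemma Corr.func {D₁ : Dallajascar S} {D₂ : Dallajascar T} {a : S} {b : T}
    (h : Corr D₁ D₂ a b) : ∀ b' : T, Corr D₁ D₂ a b' → b' = b := by
  induction h with
  | root =>
      intro b' h'
      generalize hx : D₁.r = x at h'
      cases h' with
      | root => rfl
      | child h i h₁ h₂ => exact absurd hx.symm (fun hh => not_corr_root_child i h₁ hh)
  | child h i h₁ h₂ ih =>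
      rename_i a₀ b₀
      intro b' h'
      -- need inversion on h' whose first index is a get-expression
      generalize hx : (D₁.H a₀).get ⟨i, h₁⟩ = x at h'
      cases h' with
      | root => exact absurd hx.symm (fun hh => not_corr_root_child i h₁ hh.symm)
      | child h' i' h₁' h₂' =>
          rename_i a₀' b₀'
          -- (D₁.H a₀').get ⟨i', h₁'⟩ = x = (D₁.H a₀).get ⟨i, h₁⟩
          have hxx : (D₁.H a₀').get ⟨i', h₁'⟩ = (D₁.H a₀).get ⟨i, h₁⟩ := hx.symm
          have hm1 : (D₁.H a₀').get ⟨i', h₁'⟩ ∈ D₁.H a₀' := List.get_mem _ _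
          have hm2 : (D₁.H a₀').get ⟨i', h₁'⟩ ∈ D₁.H a₀ := hxx ▸ List.get_mem _ _
          have heq : a₀' = a₀ := by
            have e1 := (D₁.mem_H a₀' _).mp hm1
            have e2 := (D₁.mem_H a₀ _).mp hm2
            rw [e1] at e2
            exact Option.some.inj e2
          subst heq
          have hii : i' = i := by
            have := ((D₁.H_nodup a₀').get_inj_iff).mp hxx
            exact Fin.mk.inj_iff.mp this
          subst hii
          have hb : b₀' = b₀ := ih b₀' h'
          subst hb
          rfl

lemma wfQ (D : Dallajascar S) : WellFounded (fun y x : S => D.phi x = some y) := by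
  have hrel : (fun y x : S => D.phi x = some y) = Function.swap D.P := rfl
  haveI : IsTrans S (Relation.TransGen (Function.swap D.P)) :=
    ⟨fun _ _ _ h₁ h₂ => h₁.trans h₂⟩
  haveI : IsIrrefl S (Relation.TransGen (Function.swap D.P)) :=
    ⟨fun x hx => D.acyclic x (Relation.transGen_swap.mp hx)⟩
  rw [hrel]
  exact Subrelation.wf (r := Relation.TransGen (Function.swap D.P))
    (fun {x y} h => Relation.TransGen.single h)
    (Finite.wellFounded_of_trans_of_irrefl _)

lemma corr_total (D₁ : Dallajascar S) (D₂ : Dallajascar T)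
    (hM : D₁.MJword = D₂.MJword) : ∀ a : S, ∃ b : T, Corr D₁ D₂ a b := by
  intro a
  induction a using WellFounded.induction (wfQ D₁) with
  | _ a IH =>
    by_cases ha : a = D₁.r
    · exact ⟨D₂.r, ha ▸ Corr.root⟩
    · have hphi : D₁.phi a ≠ none := D₁.phi_ne_none a ha
      obtain ⟨p, hp⟩ : ∃ p, D₁.phi a = some p := by
        cases h : D₁.phi a with
        | none => exact absurd h hphi
        | some p => exact ⟨p, rfl⟩
      obtain ⟨b, hb⟩ := IH p hp
      have hmem : a ∈ D₁.H p := (D₁.mem_H p a).mpr hp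
      obtain ⟨⟨i, hi⟩, hget⟩ := List.mem_iff_get.mp hmem
      have hlen : (D₁.H p).length = (D₂.H b).length := by
        have := children_words_eq D₁ D₂ (hb.w_eq hM)
        have := congrArg List.length this
        simpa using this
      exact ⟨(D₂.H b).get ⟨i, hlen ▸ hi⟩, hget ▸ Corr.child hb i hi (hlen ▸ hi)⟩

end DallaAux

open DallaAux

/-- Théorème fondamental 3.3.4: two Dallajascars are equivalent if and only if they have
the same Jassological word. -/
theorem equiv_iff_mjword_eq {S T : Type*} [Fintype S] [Nonempty S] [Fintype T]
    [Nonempty T] (D₁ : Dallajascar S) (D₂ : Dallajascar T) :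
    (∃ f : S ≃ T, ∀ a : S, D₂.H (f a) = (D₁.H a).map f) ↔ D₁.MJword = D₂.MJword := by
  constructor
  · rintro ⟨f, hf⟩
    have hpar : ∀ y x : S, D₂.phi (f y) = some (f x) ↔ D₁.phi y = some x := by
      intro y x
      rw [← D₂.mem_H, hf, List.mem_map_of_injective f.injective, D₁.mem_H]
    have hroot : f D₁.r = D₂.r := by
      by_contra hne
      have hphi : D₂.phi (f D₁.r) ≠ none := D₂.phi_ne_none _ hne
      obtain ⟨z, hz⟩ : ∃ z, D₂.phi (f D₁.r) = some z := by
        cases h : D₂.phi (f D₁.r) with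
        | none => exact absurd h hphi
        | some z => exact ⟨z, rfl⟩
      have : D₂.phi (f D₁.r) = some (f (f.symm z)) := by rw [Equiv.apply_symm_apply]; exact hz
      have := (hpar _ _).mp this
      rw [D₁.phi_root] at this
      exact nomatch this
    have hW : ∀ x : S, D₂.W (f x) = D₁.W x := by
      intro x
      induction x using WellFounded.induction D₁.wfP with
      | _ x IH =>
        rw [W_eq, W_eq, hf, List.map_map]
        congr 2
        exact congrArg List.flatten
          (List.map_congr_left fun y hy => IH y ((D₁.mem_H x y).mp hy))
    rw [Dallajascar.MJword, Dallajascar.MJword, ← hroot, hW]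
  · intro hM
    have htot := corr_total D₁ D₂ hM
    have htot' := corr_total D₂ D₁ hM.symm
    set f₀ : S → T := fun a => (htot a).choose with hf₀
    have hspec : ∀ a : S, Corr D₁ D₂ a (f₀ a) := fun a => (htot a).choose_spec
    have hinj : Function.Injective f₀ := by
      intro a a' h
      have h1 : Corr D₂ D₁ (f₀ a) a := (hspec a).swap
      have h2 : Corr D₂ D₁ (f₀ a) a' := h ▸ (hspec a').swap
      exact (h1.func a' h2).symm
    have hsurj : Function.Surjective f₀ := by
      intro b
      obtain ⟨a, ha⟩ := htot' b
      exact ⟨a, ((hspec a).func b ha.swap).symm⟩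
    refine ⟨Equiv.ofBijective f₀ ⟨hinj, hsurj⟩, ?_⟩
    intro a
    have hfa : Corr D₁ D₂ a (f₀ a) := hspec a
    have hlen : (D₂.H (f₀ a)).length = (D₁.H a).length := by
      have := children_words_eq D₁ D₂ (hfa.w_eq hM)
      have := congrArg List.length this
      simpa using this.symm
    have hcoe : ∀ x : S, (Equiv.ofBijective f₀ ⟨hinj, hsurj⟩ : S → T) x = f₀ x :=
      fun _ => rfl
    refine List.ext_get (by rw [hcoe, List.length_map]; exact hlen) ?_
    intro n h₁ h₂
    have h₂' : n < (D₁.H a).length := by simpa using h₂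
    have c1 : Corr D₁ D₂ ((D₁.H a).get ⟨n, h₂'⟩) ((D₂.H (f₀ a)).get ⟨n, h₁⟩) :=
      Corr.child hfa n h₂' h₁
    have c2 : Corr D₁ D₂ ((D₁.H a).get ⟨n, h₂'⟩) (f₀ ((D₁.H a).get ⟨n, h₂'⟩)) :=
      hspec _
    have := c2.func _ c1
    simp only [List.get_eq_getElem, List.getElem_map]
    exact this
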